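/- (Finite-temperature approximation of the Uncovered-Set score) Let P be a probabilistic tournament on n agents satisfying the margin assumption with margin δ > 0. For each agent a let u_0(a) := lim_{τ→0⁺} u_τ(a) (this limit exists). Then there exist constants C' > 0 and τ₀ > 0, depending on δ and n but not on τ, such that for all τ ∈ (0, τ₀) and all agents a: |u_τ(a) − u_0(a)| ≤ C' · τ. -/

import Mathlib

open Filter Topology

/-- The logistic sigmoid. -/
noncomputable def sigmoid (z : ℝ) : ℝ := 1 / (1 + Real.exp (-z))

/-- Soft majority edge matrix `D_τ`. -/
noncomputable def softEdge {n : ℕ} (P : Matrix (Fin n) (Fin n) ℝ) (τ : ℝ) :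
    Matrix (Fin n) (Fin n) ℝ := fun a b => sigmoid ((P a b - 1/2) / τ)

/-- 0/1 adjacency matrix of the hard majority tournament. -/
noncomputable def hardAdj {n : ℕ} (P : Matrix (Fin n) (Fin n) ℝ) : Matrix (Fin n) (Fin n) ℝ :=
  fun a b => if 1/2 < P a b then 1 else 0

/-- Soft reachability matrix `R_τ = Σ_{k=1}^K D_τ^k`. -/
noncomputable def softReach {n : ℕ} (P : Matrix (Fin n) (Fin n) ℝ) (τ : ℝ) (K : ℕ) :
    Matrix (Fin n) (Fin n) ℝ := ∑ k ∈ Finset.Icc 1 K, softEdge P τ ^ k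

/-- softmin over a finite family. -/
noncomputable def softmin {ι : Type*} (τ : ℝ) (s : Finset ι) (f : ι → ℝ) : ℝ :=
  -τ * Real.log (∑ i ∈ s, Real.exp (-(f i) / τ))

/-- scalar soft maximum over a finite family. -/
noncomputable def smax {ι : Type*} (τ : ℝ) (s : Finset ι) (f : ι → ℝ) : ℝ :=
  τ * Real.log (∑ i ∈ s, Real.exp (f i / τ))

/-- Soft Top-Cycle membership score `t_τ(a)`. -/
noncomputable def tcScore {n : ℕ} (P : Matrix (Fin n) (Fin n) ℝ) (τ : ℝ) (K : ℕ) (a : Fin n) : ℝ :=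
  softmin τ ({a}ᶜ : Finset (Fin n)) (fun b => softReach P τ K a b)

/-- Soft cover score `cover_τ(c, a)`. -/
noncomputable def coverScore {n : ℕ} (P : Matrix (Fin n) (Fin n) ℝ) (τ : ℝ) (c a : Fin n) : ℝ :=
  softEdge P τ c a *
    (1 - smax τ (Finset.univ : Finset (Fin n)) (fun b => softEdge P τ a b - softEdge P τ c b))

/-- Soft Uncovered-Set membership score `u_τ(a)`. -/
noncomputable def ucScore {n : ℕ} (P : Matrix (Fin n) (Fin n) ℝ) (τ : ℝ) (a : Fin n) : ℝ :=
  1 - smax τ ({a}ᶜ : Finset (Fin n)) (fun c => coverScore P τ c a)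

/-- `a ≻ b` in the hard majority tournament. -/
def beats {n : ℕ} (P : Matrix (Fin n) (Fin n) ℝ) (a b : Fin n) : Prop := 1/2 < P a b

/-- `a` reaches `b` via a directed path in the hard majority tournament. -/
def reaches {n : ℕ} (P : Matrix (Fin n) (Fin n) ℝ) : Fin n → Fin n → Prop :=
  Relation.TransGen (beats P)

/-- `c` covers `a` in the hard majority tournament. -/
def covers {n : ℕ} (P : Matrix (Fin n) (Fin n) ℝ) (c a : Fin n) : Prop :=
  beats P c a ∧ ∀ b, beats P a b → beats P c b

/-- membership in the Top Cycle of the hard majority tournament. -/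
def inTopCycle {n : ℕ} (P : Matrix (Fin n) (Fin n) ℝ) (a : Fin n) : Prop :=
  ∀ b, b ≠ a → reaches P a b

/-- membership in the Uncovered Set of the hard majority tournament. -/
def inUncovered {n : ℕ} (P : Matrix (Fin n) (Fin n) ℝ) (a : Fin n) : Prop :=
  ∀ c, c ≠ a → ¬ covers P c a

/-- `P` is a probabilistic tournament. -/
def IsProbTournament {n : ℕ} (P : Matrix (Fin n) (Fin n) ℝ) : Prop :=
  (∀ a b, 0 ≤ P a b ∧ P a b ≤ 1) ∧ (∀ a b, P a b + P b a = 1) ∧ ∀ a, P a a = 1/2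

/-- margin assumption with margin `δ`. -/
def HasMargin {n : ℕ} (P : Matrix (Fin n) (Fin n) ℝ) (δ : ℝ) : Prop :=
  ∀ a b, a ≠ b → δ ≤ |P a b - 1/2|

lemma sigmoid_pos (z : ℝ) : 0 < sigmoid z := by
  unfold sigmoid; positivity

lemma sigmoid_le_one (z : ℝ) : sigmoid z ≤ 1 := by
  unfold sigmoid
  rw [div_le_one (by positivity)]
  nlinarith [Real.exp_pos (-z)]

lemma exp_neg_div_le (δ τ : ℝ) (hδ : 0 < δ) (hτ : 0 < τ) :
    Real.exp (-(δ / τ)) ≤ τ / δ := by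
  rw [Real.exp_neg]
  have h2 : 0 < δ / τ := div_pos hδ hτ
  have h1 : δ / τ ≤ Real.exp (δ / τ) := by nlinarith [Real.add_one_le_exp (δ / τ)]
  calc (Real.exp (δ/τ))⁻¹ ≤ (δ/τ)⁻¹ := by gcongr
    _ = τ/δ := by rw [inv_div]

lemma one_sub_sigmoid_le (z : ℝ) : 1 - sigmoid z ≤ Real.exp (-z) := by
  unfold sigmoid
  have h := Real.exp_pos (-z)
  have h2 : (1:ℝ) - Real.exp (-z) ≤ 1/(1 + Real.exp (-z)) := by
    rw [le_div_iff₀ (by linarith)]; nlinarith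
  linarith

lemma sigmoid_le_exp (z : ℝ) : sigmoid z ≤ Real.exp z := by
  unfold sigmoid
  have h := Real.exp_pos (-z)
  have hmul : Real.exp z * Real.exp (-z) = 1 := by rw [← Real.exp_add]; simp
  rw [div_le_iff₀ (by linarith)]
  nlinarith [Real.exp_pos z]

lemma le_smax' {ι : Type*} (τ : ℝ) (hτ : 0 < τ) (s : Finset ι) (hs : s.Nonempty) (f : ι → ℝ) :
    s.sup' hs f ≤ smax τ s f := by
  obtain ⟨i, hi, hfi⟩ := Finset.exists_mem_eq_sup' hs f
  rw [smax, hfi]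
  have hsum : Real.exp (f i / τ) ≤ ∑ j ∈ s, Real.exp (f j / τ) :=
    Finset.single_le_sum (f := fun j => Real.exp (f j / τ)) (fun j _ => (Real.exp_pos _).le) hi
  have hpos : 0 < ∑ j ∈ s, Real.exp (f j / τ) := lt_of_lt_of_le (Real.exp_pos _) hsum
  have hlog : f i / τ ≤ Real.log (∑ j ∈ s, Real.exp (f j / τ)) :=
    (Real.le_log_iff_exp_le hpos).mpr hsum
  calc f i = τ * (f i / τ) := by field_simp
    _ ≤ τ * Real.log (∑ j ∈ s, Real.exp (f j / τ)) := by gcongr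

lemma smax_le' {ι : Type*} (τ : ℝ) (hτ : 0 < τ) (s : Finset ι) (hs : s.Nonempty) (f : ι → ℝ) :
    smax τ s f ≤ s.sup' hs f + τ * Real.log s.card := by
  have hbound : ∑ j ∈ s, Real.exp (f j / τ) ≤ s.card * Real.exp (s.sup' hs f / τ) := by
    calc ∑ j ∈ s, Real.exp (f j / τ) ≤ ∑ j ∈ s, Real.exp (s.sup' hs f / τ) := by
          apply Finset.sum_le_sum; intro j hj
          exact Real.exp_le_exp.mpr (by gcongr; exact Finset.le_sup' f hj)
      _ = s.card * Real.exp (s.sup' hs f / τ) := by rw [Finset.sum_const, nsmul_eq_mul]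
  have hpos : 0 < ∑ j ∈ s, Real.exp (f j / τ) := Finset.sum_pos (fun j _ => Real.exp_pos _) hs
  have hcard : (0:ℝ) < s.card := by exact_mod_cast hs.card_pos
  rw [smax]
  have hlog := Real.log_le_log hpos hbound
  rw [Real.log_mul (ne_of_gt hcard) (Real.exp_ne_zero _), Real.log_exp] at hlog
  calc τ * Real.log (∑ j ∈ s, Real.exp (f j / τ))
      ≤ τ * (Real.log s.card + s.sup' hs f / τ) := by gcongr
    _ = s.sup' hs f + τ * Real.log s.card := by field_simp; ring

lemma sup'_le_sup'_add {ι : Type*} (s : Finset ι) (hs : s.Nonempty) (f g : ι → ℝ) (ε : ℝ)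
    (h : ∀ i ∈ s, f i ≤ g i + ε) : s.sup' hs f ≤ s.sup' hs g + ε := by
  apply Finset.sup'_le
  intro i hi
  exact le_trans (h i hi) (by gcongr; exact Finset.le_sup' g hi)

lemma smax_approx {ι : Type*} (τ : ℝ) (hτ : 0 < τ) (s : Finset ι) (hs : s.Nonempty)
    (f g : ι → ℝ) (ε : ℝ) (h : ∀ i ∈ s, |f i - g i| ≤ ε) :
    |smax τ s f - s.sup' hs g| ≤ ε + τ * Real.log s.card := by
  have h1 := le_smax' τ hτ s hs f
  have h2 := smax_le' τ hτ s hs f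
  have h3 : s.sup' hs f ≤ s.sup' hs g + ε :=
    sup'_le_sup'_add _ hs _ _ _ (fun i hi => by have := abs_le.mp (h i hi); linarith [this.2])
  have h4 : s.sup' hs g ≤ s.sup' hs f + ε :=
    sup'_le_sup'_add _ hs _ _ _ (fun i hi => by have := abs_le.mp (h i hi); linarith [this.1])
  obtain ⟨i, hi⟩ := hs
  have hε : 0 ≤ ε := le_trans (abs_nonneg _) (h i hi)
  have hcard : (1:ℝ) ≤ s.card := by exact_mod_cast Finset.card_pos.mpr ⟨i, hi⟩
  have hlog : 0 ≤ τ * Real.log s.card := mul_nonneg hτ.le (Real.log_nonneg hcard)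
  rw [abs_le]; constructor <;> linarith


lemma softEdge_bound' {n : ℕ} (P : Matrix (Fin n) (Fin n) ℝ) (δ τ : ℝ)
    (hδ : 0 < δ) (hτ : 0 < τ) (hP : IsProbTournament P) (hm : HasMargin P δ)
    (a b : Fin n) :
    |softEdge P τ a b - (if a = b then 1/2 else if 1/2 < P a b then 1 else 0)| ≤ τ / δ := by
  have hτδ : 0 ≤ τ / δ := le_of_lt (div_pos hτ hδ)
  by_cases hab : a = b
  · subst hab
    have hval : softEdge P τ a a = 1/2 := by
      norm_num [softEdge, hP.2.2 a, sigmoid, Real.exp_zero]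
    simpa [hval] using hτδ
  · by_cases hgt : 1/2 < P a b
    · have hx : δ ≤ P a b - 1/2 := by
        have h := hm a b hab
        rwa [abs_of_pos (by linarith)] at h
      have h1 := one_sub_sigmoid_le ((P a b - 1/2)/τ)
      have h2 : Real.exp (-((P a b - 1/2)/τ)) ≤ Real.exp (-(δ/τ)) := by
        apply Real.exp_le_exp.mpr
        apply neg_le_neg
        gcongr
      have h3 := exp_neg_div_le δ τ hδ hτ
      have h4 := sigmoid_le_one ((P a b - 1/2)/τ)
      simp only [if_neg hab, if_pos hgt, softEdge]
      rw [abs_sub_comm, abs_of_nonneg (by linarith)]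
      linarith
    · have hx : P a b - 1/2 ≤ -δ := by
        have h := hm a b hab
        rw [abs_of_nonpos (by linarith [not_lt.mp hgt])] at h
        linarith
      have h1 := sigmoid_le_exp ((P a b - 1/2)/τ)
      have h2 : Real.exp ((P a b - 1/2)/τ) ≤ Real.exp (-(δ/τ)) := by
        apply Real.exp_le_exp.mpr
        rw [← neg_div]
        gcongr
      have h3 := exp_neg_div_le δ τ hδ hτ
      have h5 := sigmoid_pos ((P a b - 1/2)/τ)
      simp only [if_neg hab, if_neg hgt, softEdge]
      rw [sub_zero, abs_of_pos h5]
      linarith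

/-- finite-temperature approximation of the soft Uncovered-Set score:
the zero-temperature limit `u₀` exists and `|u_τ(a) − u₀(a)| ≤ C'·τ` for small `τ`. -/
theorem ucScore_finite_temperature_bound {n : ℕ} (hn : 2 ≤ n)
    (P : Matrix (Fin n) (Fin n) ℝ) (δ : ℝ) (hδ : 0 < δ)
    (hP : IsProbTournament P) (hmargin : HasMargin P δ) :
    ∃ u0 : Fin n → ℝ,
      (∀ a, Tendsto (fun τ : ℝ => ucScore P τ a) (𝓝[>] (0:ℝ)) (𝓝 (u0 a))) ∧
      ∃ C' : ℝ, 0 < C' ∧ ∃ τ₀ : ℝ, 0 < τ₀ ∧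
        ∀ τ : ℝ, 0 < τ → τ < τ₀ → ∀ a, |ucScore P τ a - u0 a| ≤ C' * τ := by
  obtain ⟨hrange, hsum2, hdiag⟩ := id hP
  have hnpos : 0 < n := by omega
  have huniv : (Finset.univ : Finset (Fin n)).Nonempty := ⟨⟨0, hnpos⟩, Finset.mem_univ _⟩
  have hcompl : ∀ a : Fin n, ({a}ᶜ : Finset (Fin n)).Nonempty := by
    intro a
    have hcard1 : 1 < Fintype.card (Fin n) := by rw [Fintype.card_fin]; omega
    obtain ⟨b, hb⟩ := Fintype.exists_ne_of_one_lt_card hcard1 a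
    exact ⟨b, Finset.mem_compl.mpr (by simpa using hb)⟩
  set D0 : Fin n → Fin n → ℝ :=
    fun a b => if a = b then 1/2 else if 1/2 < P a b then 1 else 0 with hD0def
  have hedge : ∀ τ : ℝ, 0 < τ → ∀ a b, |softEdge P τ a b - D0 a b| ≤ τ / δ :=
    fun τ hτ a b => softEdge_bound' P δ τ hδ hτ hP hmargin a b
  have hD0mem : ∀ a b, 0 ≤ D0 a b ∧ D0 a b ≤ 1 := by
    intro a b
    simp only [hD0def]
    split_ifs <;> norm_num
  set cover0 : Fin n → Fin n → ℝ := fun c a =>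
    D0 c a * (1 - Finset.univ.sup' huniv fun b => D0 a b - D0 c b) with hc0def
  set u0 : Fin n → ℝ :=
    fun a => 1 - ({a}ᶜ : Finset (Fin n)).sup' (hcompl a) (fun c => cover0 c a) with hu0def
  have hlogn : 0 ≤ Real.log n := Real.log_nonneg (by exact_mod_cast (by omega : 1 ≤ n))
  set C' : ℝ := 5/δ + 2 * Real.log n with hC'def
  have hC'pos : 0 < C' := by
    have h5 : 0 < 5/δ := by positivity
    rw [hC'def]; linarith
  set τ₀ : ℝ := 1 / (1 + Real.log n) with hτ₀def
  have hτ₀pos : 0 < τ₀ := by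
    rw [hτ₀def]
    exact div_pos one_pos (by linarith)
  have hEb : ∀ τ : ℝ, ∀ x y : Fin n, 0 ≤ softEdge P τ x y ∧ softEdge P τ x y ≤ 1 :=
    fun τ x y => ⟨(sigmoid_pos _).le, sigmoid_le_one _⟩
  have key : ∀ τ : ℝ, 0 < τ → τ < τ₀ → ∀ a, |ucScore P τ a - u0 a| ≤ C' * τ := by
    intro τ hτ hττ₀ a
    have hτδ : 0 ≤ τ / δ := (div_pos hτ hδ).le
    have hτlogn : τ * Real.log n ≤ 1 := by
      rw [hτ₀def, lt_div_iff₀ (by linarith)] at hττ₀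
      nlinarith
    have hcov : ∀ c ∈ ({a}ᶜ : Finset (Fin n)),
        |coverScore P τ c a - cover0 c a| ≤ (5/δ + Real.log n) * τ := by
      intro c _
      set S : ℝ := smax τ (Finset.univ : Finset (Fin n))
        (fun b => softEdge P τ a b - softEdge P τ c b) with hSdef
      set S0 : ℝ := Finset.univ.sup' huniv (fun b => D0 a b - D0 c b) with hS0def
      have hSS0 : |S - S0| ≤ 2*(τ/δ) + τ * Real.log n := by
        have happ := smax_approx τ hτ Finset.univ huniv
          (fun b => softEdge P τ a b - softEdge P τ c b)
          (fun b => D0 a b - D0 c b) (2*(τ/δ)) ?side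
        case side =>
          intro b _
          have h1 := hedge τ hτ a b
          have h2 := hedge τ hτ c b
          have heq : (softEdge P τ a b - softEdge P τ c b) - (D0 a b - D0 c b)
              = (softEdge P τ a b - D0 a b) - (softEdge P τ c b - D0 c b) := by ring
          rw [heq]
          calc |(softEdge P τ a b - D0 a b) - (softEdge P τ c b - D0 c b)|
              ≤ |softEdge P τ a b - D0 a b| + |softEdge P τ c b - D0 c b| := abs_sub _ _
            _ ≤ 2*(τ/δ) := by linarith
        rw [Finset.card_univ, Fintype.card_fin] at happ
        rw [hSdef, hS0def]
        exact happ
      have hSlb : (-1:ℝ) ≤ S := by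
        have hfa : (-1:ℝ) ≤ softEdge P τ a a - softEdge P τ c a := by
          have h1 := hEb τ a a
          have h2 := hEb τ c a
          linarith [h1.1, h2.2]
        rw [hSdef]
        exact le_trans hfa (le_trans
          (Finset.le_sup' (fun b => softEdge P τ a b - softEdge P τ c b) (Finset.mem_univ a))
          (le_smax' τ hτ _ huniv _))
      have hSub : S ≤ 2 := by
        have h := smax_le' τ hτ Finset.univ huniv (fun b => softEdge P τ a b - softEdge P τ c b)
        have hsup : Finset.univ.sup' huniv (fun b => softEdge P τ a b - softEdge P τ c b) ≤ 1 := by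
          apply Finset.sup'_le
          intro b _
          have h1 := hEb τ a b
          have h2 := hEb τ c b
          linarith [h1.2, h2.1]
        rw [Finset.card_univ, Fintype.card_fin] at h
        rw [hSdef]
        linarith
      have hE := hedge τ hτ c a
      have hD0ca := hD0mem c a
      have expand : coverScore P τ c a - cover0 c a
          = (softEdge P τ c a - D0 c a) * (1 - S) + D0 c a * (S0 - S) := by
        simp only [hSdef, hS0def, hc0def, coverScore]
        ring
      calc |coverScore P τ c a - cover0 c a|
          = |(softEdge P τ c a - D0 c a) * (1 - S) + D0 c a * (S0 - S)| := by rw [expand]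
        _ ≤ |(softEdge P τ c a - D0 c a) * (1 - S)| + |D0 c a * (S0 - S)| := abs_add_le _ _
        _ = |softEdge P τ c a - D0 c a| * |1 - S| + |D0 c a| * |S0 - S| := by
            rw [abs_mul, abs_mul]
        _ ≤ (τ/δ) * 3 + 1 * (2*(τ/δ) + τ * Real.log n) := by
            have hb1 : |1 - S| ≤ 3 := abs_le.mpr ⟨by linarith, by linarith⟩
            have hb2 : |D0 c a| ≤ 1 := by rw [abs_of_nonneg hD0ca.1]; exact hD0ca.2
            have hb3 : |S0 - S| ≤ 2*(τ/δ) + τ * Real.log n := by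
              rw [abs_sub_comm]; exact hSS0
            exact add_le_add (mul_le_mul hE hb1 (abs_nonneg _) hτδ)
              (mul_le_mul hb2 hb3 (abs_nonneg _) one_pos.le)
        _ ≤ (5/δ + Real.log n) * τ := by
            have heq : (τ/δ) * 3 + 1 * (2*(τ/δ) + τ * Real.log n)
                = (5/δ + Real.log n) * τ := by field_simp; ring
            exact le_of_eq heq
    have houter := smax_approx τ hτ ({a}ᶜ : Finset (Fin n)) (hcompl a)
      (fun c => coverScore P τ c a) (fun c => cover0 c a) ((5/δ + Real.log n)*τ) hcov
    have hcardle : Real.log ((({a}ᶜ : Finset (Fin n)).card : ℕ) : ℝ) ≤ Real.log n := by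
      have h1 : (0:ℝ) < ((({a}ᶜ : Finset (Fin n)).card : ℕ) : ℝ) := by
        exact_mod_cast (hcompl a).card_pos
      apply Real.log_le_log h1
      have h2 : ({a}ᶜ : Finset (Fin n)).card ≤ n := by
        calc ({a}ᶜ : Finset (Fin n)).card ≤ (Finset.univ : Finset (Fin n)).card :=
              Finset.card_le_univ _
          _ = n := by rw [Finset.card_univ, Fintype.card_fin]
      exact_mod_cast h2
    have hdiff : ucScore P τ a - u0 a
        = ({a}ᶜ : Finset (Fin n)).sup' (hcompl a) (fun c => cover0 c a)
          - smax τ ({a}ᶜ : Finset (Fin n)) (fun c => coverScore P τ c a) := by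
      simp only [ucScore, hu0def]
      ring
    rw [hdiff, abs_sub_comm]
    calc |smax τ ({a}ᶜ : Finset (Fin n)) (fun c => coverScore P τ c a)
          - ({a}ᶜ : Finset (Fin n)).sup' (hcompl a) (fun c => cover0 c a)|
        ≤ (5/δ + Real.log n)*τ + τ * Real.log (({a}ᶜ : Finset (Fin n)).card) := houter
      _ ≤ (5/δ + Real.log n)*τ + τ * Real.log n := by
          have := mul_le_mul_of_nonneg_left hcardle hτ.le
          linarith
      _ = C' * τ := by rw [hC'def]; ring
  refine ⟨u0, ?_, C', hC'pos, τ₀, hτ₀pos, key⟩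
  intro a
  rw [tendsto_iff_dist_tendsto_zero]
  have h1 : ∀ᶠ τ in 𝓝[>] (0:ℝ), dist (ucScore P τ a) (u0 a) ≤ C' * τ := by
    filter_upwards [Ioo_mem_nhdsGT_of_mem ⟨le_refl (0:ℝ), hτ₀pos⟩] with τ hτm
    rw [Real.dist_eq]
    exact key τ hτm.1 hτm.2 a
  have h2 : Tendsto (fun τ : ℝ => C' * τ) (𝓝[>] (0:ℝ)) (𝓝 0) := by
    have h3 : Tendsto (fun τ : ℝ => C' * τ) (𝓝 (0:ℝ)) (𝓝 (C' * 0)) :=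
      (continuous_const.mul continuous_id).tendsto (0:ℝ)
    simpa using h3.mono_left nhdsWithin_le_nhds
  exact squeeze_zero' (Filter.Eventually.of_forall fun _ => dist_nonneg) h1 h2
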